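/- Suppose a group G = AB with subgroups H₁, H₂ satisfying A ∩ B ≤ H₁ ≤ A, A ∩ B ≤ H₂ ≤ A, and subgroups K₁, K₂ with A ∩ B ≤ K₁ ≤ B, A ∩ B ≤ K₂ ≤ B. If H₁K₁ ⊆ H₂K₂ (as sets), then H₁ ≤ H₂ and K₁ ≤ K₂. -/
import Mathlib

open scoped Pointwise

theorem stmt8 {G : Type*} [Group G] (A B H₁ H₂ K₁ K₂ : Subgroup G)
    (hG : ∀ g : G, ∃ a ∈ A, ∃ b ∈ B, g = a * b)
    (hH₁ : A ⊓ B ≤ H₁) (hH₁A : H₁ ≤ A) (hH₂ : A ⊓ B ≤ H₂) (hH₂A : H₂ ≤ A)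
    (hK₁ : A ⊓ B ≤ K₁) (hK₁B : K₁ ≤ B) (hK₂ : A ⊓ B ≤ K₂) (hK₂B : K₂ ≤ B)
    (hsub : (H₁ : Set G) * (K₁ : Set G) ⊆ (H₂ : Set G) * (K₂ : Set G)) :
    H₁ ≤ H₂ ∧ K₁ ≤ K₂ := by
  constructor
  · intro h hh
    obtain ⟨h₂, hh₂, k₂, hk₂, heq⟩ := hsub ⟨h, hh, 1, K₁.one_mem, mul_one h⟩
    have : k₂ ∈ A ⊓ B := ⟨by
      have : k₂ = h₂⁻¹ * h := by simp only at heq; rw [← heq]; group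
      rw [this]; exact A.mul_mem (A.inv_mem (hH₂A hh₂)) (hH₁A hh),
      hK₂B hk₂⟩
    rw [← heq]
    exact H₂.mul_mem hh₂ (hH₂ ‹k₂ ∈ A ⊓ B›)
  · intro k hk
    obtain ⟨h₂, hh₂, k₂, hk₂, heq⟩ := hsub ⟨1, H₁.one_mem, k, hk, one_mul k⟩
    have hmem : h₂ ∈ A ⊓ B := ⟨hH₂A hh₂, by
      have : h₂ = k * k₂⁻¹ := by simp only at heq; rw [← heq]; group
      rw [this]; exact B.mul_mem (hK₁B hk) (B.inv_mem (hK₂B hk₂))⟩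
    rw [← heq]
    exact K₂.mul_mem (hK₂ hmem) hk₂
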